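/- Let (W₁, ε₁), (W₂, ε₂), (W₃, ε₃) be augmented commutative ℝ-algebras. Regard W₁ ⊗̃ W₂ as augmented by the restriction of ε₁ ⊗ ε₂ : W₁ ⊗ W₂ → ℝ, and regard W₂ ⊗ W₃ as augmented by ε₂ ⊗ ε₃. Let j : (W₁ ⊗̃ W₂) ⊗ W₃ → (W₁ ⊗ W₂) ⊗ W₃ be the ℝ-algebra homomorphism induced by the inclusion W₁ ⊗̃ W₂ ↪ W₁ ⊗ W₂ and the identity of W₃, and let α : (W₁ ⊗ W₂) ⊗ W₃ ≅ W₁ ⊗ (W₂ ⊗ W₃) be the associativity isomorphism of tensor products. Then α maps the image under j of the subalgebra (W₁ ⊗̃ W₂) ⊗̃ W₃ bijectively onto the subalgebra W₁ ⊗̃ (W₂ ⊗ W₃); that is, (W₁ ⊗̃ W₂) ⊗̃ W₃ = W₁ ⊗̃ (W₂ ⊗ W₃). -/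

import Mathlib

open TensorProduct Polynomial

noncomputable section

/-- The first projection `p₁ : A ⊗ B →ₐ[ℝ] B`, `a ⊗ b ↦ ε_A a • b`. -/
def p1 {A B : Type} [CommRing A] [CommRing B] [Algebra ℝ A] [Algebra ℝ B]
    (εA : A →ₐ[ℝ] ℝ) : (A ⊗[ℝ] B) →ₐ[ℝ] B :=
  Algebra.TensorProduct.productMap ((Algebra.ofId ℝ B).comp εA) (AlgHom.id ℝ B)

/-- The second projection `p₀ : A ⊗ B →ₐ[ℝ] B`, `a ⊗ b ↦ (ε_A a * ε_B b) • 1`. -/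
def p0 {A B : Type} [CommRing A] [CommRing B] [Algebra ℝ A] [Algebra ℝ B]
    (εA : A →ₐ[ℝ] ℝ) (εB : B →ₐ[ℝ] ℝ) : (A ⊗[ℝ] B) →ₐ[ℝ] B :=
  Algebra.TensorProduct.productMap ((Algebra.ofId ℝ B).comp εA) ((Algebra.ofId ℝ B).comp εB)

/-- The reduced tensor product `A ⊗̃ B`: the equalizer subalgebra of `p₁` and `p₀`. -/
def redT {A B : Type} [CommRing A] [CommRing B] [Algebra ℝ A] [Algebra ℝ B]
    (εA : A →ₐ[ℝ] ℝ) (εB : B →ₐ[ℝ] ℝ) : Subalgebra ℝ (A ⊗[ℝ] B) :=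
  AlgHom.equalizer (p1 εA) (p0 εA εB)

/-- The tensor product of two augmentations, `a ⊗ b ↦ ε_A a * ε_B b`. -/
def tensAug {A B : Type} [CommRing A] [CommRing B] [Algebra ℝ A] [Algebra ℝ B]
    (εA : A →ₐ[ℝ] ℝ) (εB : B →ₐ[ℝ] ℝ) : (A ⊗[ℝ] B) →ₐ[ℝ] ℝ :=
  Algebra.TensorProduct.productMap εA εB

set_option synthInstance.maxHeartbeats 1000000
set_option maxHeartbeats 1000000

section Aux

variable (W1 W2 W3 : Type) [CommRing W1] [CommRing W2] [CommRing W3]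
    [Algebra ℝ W1] [Algebra ℝ W2] [Algebra ℝ W3]
    (ε1 : W1 →ₐ[ℝ] ℝ) (ε2 : W2 →ₐ[ℝ] ℝ) (ε3 : W3 →ₐ[ℝ] ℝ)

/-- Difference of the two projections on `W1 ⊗ (W2 ⊗ W3)`. -/
def myD : (W1 ⊗[ℝ] (W2 ⊗[ℝ] W3)) →ₗ[ℝ] (W2 ⊗[ℝ] W3) :=
  (p1 ε1).toLinearMap - (p0 ε1 (tensAug ε2 ε3)).toLinearMap

/-- Difference of the two projections on `W1 ⊗ W2`. -/
def myd : (W1 ⊗[ℝ] W2) →ₗ[ℝ] W2 :=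
  (p1 ε1).toLinearMap - (p0 ε1 ε2).toLinearMap

/-- Difference of the two projections on `(W1 ⊗ W2) ⊗ W3`. -/
def myP : ((W1 ⊗[ℝ] W2) ⊗[ℝ] W3) →ₗ[ℝ] W3 :=
  (p1 (tensAug ε1 ε2)).toLinearMap - (p0 (tensAug ε1 ε2) ε3).toLinearMap

/-- The associator as a linear map. -/
def myαl : ((W1 ⊗[ℝ] W2) ⊗[ℝ] W3) →ₗ[ℝ] (W1 ⊗[ℝ] (W2 ⊗[ℝ] W3)) :=
  (Algebra.TensorProduct.assoc ℝ ℝ ℝ W1 W2 W3).toAlgHom.toLinearMap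

/-- The right inclusion `W3 → W2 ⊗ W3` as a linear map. -/
def myincR : W3 →ₗ[ℝ] (W2 ⊗[ℝ] W3) :=
  (Algebra.TensorProduct.includeRight : W3 →ₐ[ℝ] W2 ⊗[ℝ] W3).toLinearMap

lemma myI1 : myP W1 W2 W3 ε1 ε2 ε3 =
    (p1 ε2).toLinearMap ∘ₗ (myD W1 W2 W3 ε1 ε2 ε3 ∘ₗ myαl W1 W2 W3) := by
  ext u v c
  simp only [myP, myD, myαl, p1, p0, tensAug, AlgebraTensorModule.curry_apply,
    curry_apply, LinearMap.coe_restrictScalars, LinearMap.sub_apply,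
    AlgHom.toLinearMap_apply, Algebra.TensorProduct.productMap_apply_tmul, AlgHom.coe_comp,
    Function.comp_apply, Algebra.ofId_apply, AlgHom.coe_id, id_eq, LinearMap.coe_comp,
    AlgEquiv.toAlgHom_eq_coe, AlgHom.coe_coe, AlgEquiv.coe_toAlgHom, Algebra.TensorProduct.assoc_tmul,
    Algebra.TensorProduct.includeRight_apply]
  simp only [map_sub, Algebra.algebraMap_eq_smul_one, Algebra.TensorProduct.one_def,
    Algebra.TensorProduct.tmul_mul_tmul, smul_mul_assoc, mul_smul_comm, one_mul, mul_one,
    ← smul_tmul', tmul_smul, smul_smul, sub_tmul, tmul_sub, map_smul, map_one, Algebra.TensorProduct.productMap_apply_tmul, AlgHom.coe_comp,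
    Function.comp_apply, Algebra.ofId_apply, AlgHom.coe_id, id_eq]
  module

lemma myI2 : LinearMap.rTensor W3 (myd W1 W2 ε1 ε2) =
    myD W1 W2 W3 ε1 ε2 ε3 ∘ₗ myαl W1 W2 W3 - myincR W2 W3 ∘ₗ myP W1 W2 W3 ε1 ε2 ε3 := by
  ext u v c
  simp only [myP, myD, myd, myαl, myincR, p1, p0, tensAug, AlgebraTensorModule.curry_apply,
    curry_apply, LinearMap.coe_restrictScalars, LinearMap.rTensor_tmul, LinearMap.sub_apply,
    AlgHom.toLinearMap_apply, Algebra.TensorProduct.productMap_apply_tmul, AlgHom.coe_comp,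
    Function.comp_apply, Algebra.ofId_apply, AlgHom.coe_id, id_eq, LinearMap.coe_comp,
    AlgEquiv.toAlgHom_eq_coe, AlgHom.coe_coe, AlgEquiv.coe_toAlgHom, Algebra.TensorProduct.assoc_tmul,
    Algebra.TensorProduct.includeRight_apply]
  simp only [Algebra.algebraMap_eq_smul_one, Algebra.TensorProduct.one_def,
    Algebra.TensorProduct.tmul_mul_tmul, smul_mul_assoc, mul_smul_comm, one_mul, mul_one,
    ← smul_tmul', tmul_smul, smul_smul, sub_tmul, tmul_sub]
  module

/-- The formal part of associativity: the behaviour of `D ∘ α` on `(W1 ⊗ W2) ⊗ W3`. -/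
lemma myI4 : myD W1 W2 W3 ε1 ε2 ε3 ∘ₗ myαl W1 W2 W3 =
    LinearMap.rTensor W3 (p1 ε1).toLinearMap -
      myincR W2 W3 ∘ₗ (p0 (tensAug ε1 ε2) ε3).toLinearMap := by
  ext u v c
  simp only [myD, myαl, myincR, p1, p0, tensAug, AlgebraTensorModule.curry_apply,
    curry_apply, LinearMap.coe_restrictScalars, LinearMap.rTensor_tmul, LinearMap.sub_apply,
    AlgHom.toLinearMap_apply, Algebra.TensorProduct.productMap_apply_tmul, AlgHom.coe_comp,
    Function.comp_apply, Algebra.ofId_apply, AlgHom.coe_id, id_eq, LinearMap.coe_comp,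
    AlgEquiv.toAlgHom_eq_coe, AlgHom.coe_coe, AlgEquiv.coe_toAlgHom, Algebra.TensorProduct.assoc_tmul,
    Algebra.TensorProduct.includeRight_apply]
  simp only [Algebra.algebraMap_eq_smul_one, Algebra.TensorProduct.one_def,
    Algebra.TensorProduct.tmul_mul_tmul, smul_mul_assoc, mul_smul_comm, one_mul, mul_one,
    ← smul_tmul', tmul_smul, smul_smul, sub_tmul, tmul_sub]
  module

/-- `p₀` is the augmentation followed by the unit map. -/
lemma p0_eq : p0 ε1 ε2 = (Algebra.ofId ℝ W2).comp (tensAug ε1 ε2) := by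
  ext x
  · simp [p0, tensAug, Algebra.ofId_apply]
  · simp [p0, tensAug, Algebra.ofId_apply]

/-- The linearization of `j` is `rTensor` of the inclusion. -/
lemma myjl_eq : (Algebra.TensorProduct.map (redT ε1 ε2).val (AlgHom.id ℝ W3)).toLinearMap =
    LinearMap.rTensor W3 (redT ε1 ε2).val.toLinearMap := by
  ext a c
  simp

/-- Key identity: on `(redT ε1 ε2) ⊗ W3`, the map `D ∘ α ∘ j` lands in `1 ⊗ W3` via the
equalizer difference of the reduced algebra. -/
lemma myI3 :
    myD W1 W2 W3 ε1 ε2 ε3 ∘ₗ myαl W1 W2 W3 ∘ₗ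
        (Algebra.TensorProduct.map (redT ε1 ε2).val (AlgHom.id ℝ W3)).toLinearMap =
      myincR W2 W3 ∘ₗ
        ((p1 ((tensAug ε1 ε2).comp (redT ε1 ε2).val)).toLinearMap -
          (p0 ((tensAug ε1 ε2).comp (redT ε1 ε2).val) ε3).toLinearMap) := by
  ext a c
  obtain ⟨a, ha⟩ := a
  have ha' : p1 ε1 a = p0 ε1 ε2 a := ha
  rw [← LinearMap.comp_assoc]
  simp only [LinearMap.coe_comp, Function.comp_apply, AlgebraTensorModule.curry_apply,
    curry_apply, LinearMap.coe_restrictScalars, AlgHom.toLinearMap_apply,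
    Algebra.TensorProduct.map_tmul, AlgHom.coe_id, id_eq, Subalgebra.coe_val]
  have h4 : (myD W1 W2 W3 ε1 ε2 ε3) ((myαl W1 W2 W3) (a ⊗ₜ[ℝ] c)) =
      LinearMap.rTensor W3 (p1 ε1).toLinearMap (a ⊗ₜ[ℝ] c) -
        myincR W2 W3 ((p0 (tensAug ε1 ε2) ε3) (a ⊗ₜ[ℝ] c)) := by
    rw [← LinearMap.comp_apply, myI4 W1 W2 W3 ε1 ε2 ε3]
    simp
  rw [h4, LinearMap.rTensor_tmul, AlgHom.toLinearMap_apply, ha', p0_eq W1 W2 ε1 ε2]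
  simp only [LinearMap.sub_apply, AlgHom.toLinearMap_apply, AlgHom.coe_comp, Function.comp_apply,
    Algebra.ofId_apply, myincR, Algebra.TensorProduct.includeRight_apply, p1, p0, tensAug,
    Algebra.TensorProduct.productMap_apply_tmul, AlgHom.coe_id, id_eq, Subalgebra.coe_val]
  simp only [map_sub, Algebra.algebraMap_eq_smul_one, Algebra.TensorProduct.one_def,
    Algebra.TensorProduct.tmul_mul_tmul, smul_mul_assoc, mul_smul_comm, one_mul, mul_one,
    ← smul_tmul', tmul_smul, smul_smul, sub_tmul, tmul_sub, map_smul, map_one,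
    Algebra.TensorProduct.productMap_apply_tmul]

end Aux

/-- Associativity of the reduced tensor product:
`(W₁ ⊗̃ W₂) ⊗̃ W₃ = W₁ ⊗̃ (W₂ ⊗ W₃)`, where the left-hand side is transported into
`W₁ ⊗ (W₂ ⊗ W₃)` along `j` and the associativity isomorphism `α`. -/
theorem reduced_tensor_assoc (W1 W2 W3 : Type) [CommRing W1] [CommRing W2] [CommRing W3]
    [Algebra ℝ W1] [Algebra ℝ W2] [Algebra ℝ W3]
    (ε1 : W1 →ₐ[ℝ] ℝ) (ε2 : W2 →ₐ[ℝ] ℝ) (ε3 : W3 →ₐ[ℝ] ℝ) :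
    Subalgebra.map (Algebra.TensorProduct.assoc ℝ ℝ ℝ W1 W2 W3).toAlgHom
      (Subalgebra.map (Algebra.TensorProduct.map (redT ε1 ε2).val (AlgHom.id ℝ W3))
        (redT ((tensAug ε1 ε2).comp (redT ε1 ε2).val) ε3)) =
      redT ε1 (tensAug ε2 ε3) := by
  have hflat : Module.Flat ℝ W3 := inferInstance
  have hincR : ∀ w, p1 ε2 (myincR W2 W3 w) = w := by
    intro w
    simp [myincR, p1]
  apply SetLike.ext
  intro x
  simp only [Subalgebra.mem_map]
  constructor
  · rintro ⟨y, ⟨z, hz, rfl⟩, rfl⟩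
    have hz' : p1 ((tensAug ε1 ε2).comp (redT ε1 ε2).val) z =
        p0 ((tensAug ε1 ε2).comp (redT ε1 ε2).val) ε3 z := hz
    have h3 := DFunLike.congr_fun (myI3 W1 W2 W3 ε1 ε2 ε3) z
    simp only [LinearMap.coe_comp, Function.comp_apply, LinearMap.sub_apply,
      AlgHom.toLinearMap_apply, myD, myαl, AlgEquiv.toAlgHom_eq_coe, AlgHom.coe_coe,
      hz', sub_self, map_zero] at h3
    show _ ∈ redT ε1 (tensAug ε2 ε3)
    rw [redT, AlgHom.mem_equalizer, ← sub_eq_zero]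
    simpa using h3
  · intro hx
    have hx' : p1 ε1 x = p0 ε1 (tensAug ε2 ε3) x := hx
    have hDx : myD W1 W2 W3 ε1 ε2 ε3 x = 0 := by
      simp [myD, LinearMap.sub_apply, hx']
    set y := (Algebra.TensorProduct.assoc ℝ ℝ ℝ W1 W2 W3).symm x with hy
    have hαy : myαl W1 W2 W3 y = x := by
      simp [myαl, hy]
      exact (LinearEquiv.eq_symm_apply _).mp rfl
    have hPy : myP W1 W2 W3 ε1 ε2 ε3 y = 0 := by
      rw [myI1 W1 W2 W3 ε1 ε2 ε3]
      simp [hαy, hDx]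
    have hker : LinearMap.rTensor W3 (myd W1 W2 ε1 ε2) y = 0 := by
      rw [myI2 W1 W2 W3 ε1 ε2 ε3]
      simp [hαy, hDx, hPy]
    have hexact : Function.Exact ((redT ε1 ε2).val.toLinearMap) (myd W1 W2 ε1 ε2) := by
      rw [LinearMap.exact_iff]
      ext w
      simp only [LinearMap.mem_ker, LinearMap.mem_range, myd, LinearMap.sub_apply,
        AlgHom.toLinearMap_apply, sub_eq_zero]
      constructor
      · intro hw
        exact ⟨⟨w, hw⟩, rfl⟩
      · rintro ⟨⟨a, haa⟩, rfl⟩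
        exact haa
    have hex3 := Module.Flat.rTensor_exact (M := W3) hexact
    obtain ⟨z, hzy⟩ := (hex3 y).mp hker
    have hjz : (Algebra.TensorProduct.map (redT ε1 ε2).val (AlgHom.id ℝ W3)) z = y := by
      rw [← hzy, ← AlgHom.toLinearMap_apply, myjl_eq W1 W2 W3 ε1 ε2]
    have h3 := DFunLike.congr_fun (myI3 W1 W2 W3 ε1 ε2 ε3) z
    simp only [LinearMap.coe_comp, Function.comp_apply, LinearMap.sub_apply,
      AlgHom.toLinearMap_apply, hjz, hαy, hDx] at h3
    have h5 := congrArg (p1 ε2) h3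
    simp only [map_zero, hincR] at h5
    have hzmem : z ∈ redT ((tensAug ε1 ε2).comp (redT ε1 ε2).val) ε3 := by
      show p1 _ z = p0 _ ε3 z
      rw [← sub_eq_zero]
      exact h5.symm
    refine ⟨_, ⟨z, hzmem, rfl⟩, ?_⟩
    rw [hjz]
    simp [hy]


end
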